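/- Every independent set of 7 vertices in the 4-cube (i.e., every set of 7 pairwise non-adjacent vertices) is contained in a single parity class: all 7 vertices have coordinate sums of the same parity. -/

import Mathlib

/-- Flip coordinate `i` of a binary `n`-tuple. -/
def flipBit {n : ℕ} (v : Fin n → ZMod 2) (i : Fin n) : Fin n → ZMod 2 :=
  Function.update v i (v i + 1)

abbrev Odd4 := {v : Fin 4 → ZMod 2 // ∑ i, v i = 1}
abbrev Even4 := {v : Fin 4 → ZMod 2 // ∑ i, v i = 0}

set_option maxRecDepth 10000 in
lemma keyOdd : ∀ O : Finset Odd4, O.Nonempty → O.card ≤ 3 →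
    O.card + (Finset.univ.filter (fun e : Even4 =>
      ∀ o ∈ O, ¬∃ i, (e : Fin 4 → ZMod 2) = flipBit (o : Fin 4 → ZMod 2) i)).card ≤ 6 := by
  decide

set_option maxRecDepth 10000 in
lemma keyEven : ∀ E : Finset Even4, E.Nonempty → E.card ≤ 3 →
    E.card + (Finset.univ.filter (fun o : Odd4 =>
      ∀ e ∈ E, ¬∃ i, (o : Fin 4 → ZMod 2) = flipBit (e : Fin 4 → ZMod 2) i)).card ≤ 6 := by
  decide

theorem independent_7_set_in_4cube_one_parity (S : Finset (Fin 4 → ZMod 2))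
    (hcard : S.card = 7)
    (hind : ∀ v ∈ S, ∀ w ∈ S, v ≠ w → ¬ ∃ i, w = flipBit v i) :
    ∃ ε : ZMod 2, ∀ v ∈ S, ∑ i, v i = ε := by
  have two : ∀ x : ZMod 2, x ≠ 0 → x = 1 := by decide
  by_cases h0 : ∀ v ∈ S, ∑ i, v i = 0
  · exact ⟨0, h0⟩
  by_cases h1 : ∀ v ∈ S, ∑ i, v i = 1
  · exact ⟨1, h1⟩
  exfalso
  push_neg at h0 h1
  obtain ⟨a, haS, ha⟩ := h0
  obtain ⟨b, hbS, hb⟩ := h1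
  have ha1 : ∑ i, a i = 1 := two _ ha
  have hb0 : ∑ i, b i = 0 := by
    rcases eq_or_ne (∑ i, b i) 0 with h | h
    · exact h
    · exact absurd (two _ h) hb
  set O : Finset Odd4 := S.subtype _ with hO
  set E : Finset Even4 := S.subtype _ with hE
  have hOne : O.Nonempty := ⟨⟨a, ha1⟩, by simp [hO, haS]⟩
  have hEne : E.Nonempty := ⟨⟨b, hb0⟩, by simp [hE, hbS]⟩
  have hcards : O.card + E.card = 7 := by
    rw [hO, hE, Finset.card_subtype, Finset.card_subtype]
    have : S.filter (fun v => ∑ i, v i = 0) = S.filter (fun v => ¬ ∑ i, v i = 1) := by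
      apply Finset.filter_congr
      intro v _
      constructor
      · intro h h'; rw [h'] at h; exact one_ne_zero h
      · intro h
        rcases eq_or_ne (∑ i, v i) 0 with h' | h'
        · exact h'
        · exact absurd (two _ h') h
    rw [this, Finset.card_filter_add_card_filter_not, hcard]
  have hne : ∀ (o : Odd4) (e : Even4), (o : Fin 4 → ZMod 2) ≠ (e : Fin 4 → ZMod 2) := by
    intro o e h
    have := o.2
    rw [h, e.2] at this
    exact one_ne_zero this.symm
  rcases le_or_gt O.card 3 with hle | hlt
  · have hsub : E ⊆ Finset.univ.filter (fun e : Even4 =>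
        ∀ o ∈ O, ¬∃ i, (e : Fin 4 → ZMod 2) = flipBit (o : Fin 4 → ZMod 2) i) := by
      intro e he
      simp only [Finset.mem_filter, Finset.mem_univ, true_and]
      intro o ho
      have heS : (e : Fin 4 → ZMod 2) ∈ S := by simpa [hE] using he
      have hoS : (o : Fin 4 → ZMod 2) ∈ S := by simpa [hO] using ho
      exact hind _ hoS _ heS (hne o e)
    have := keyOdd O hOne hle
    have := Finset.card_le_card hsub
    omega
  · have hle : E.card ≤ 3 := by omega
    have hsub : O ⊆ Finset.univ.filter (fun o : Odd4 =>
        ∀ e ∈ E, ¬∃ i, (o : Fin 4 → ZMod 2) = flipBit (e : Fin 4 → ZMod 2) i) := by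
      intro o ho
      simp only [Finset.mem_filter, Finset.mem_univ, true_and]
      intro e he
      have heS : (e : Fin 4 → ZMod 2) ∈ S := by simpa [hE] using he
      have hoS : (o : Fin 4 → ZMod 2) ∈ S := by simpa [hO] using ho
      exact hind _ heS _ hoS (hne o e).symm
    have := keyEven E hEne hle
    have := Finset.card_le_card hsub
    omega
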